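/- Let m > 0 and δ > 0. Then there exists ε_δ > 0 such that for all ω ∈ ℝ with |ω| > m + δ, all ε ∈ (0, ε_δ), and every k ∈ ℂ with Im k > 0 and k² = (ω + iε)² − m², one has ε·(∫_ℝ |∂ₓ exp(i·k·|x|)|² dx + m² ∫_ℝ |exp(i·k·|x|)|² dx) ≥ |ω|·√(ω² − m²)/2. -/

import Mathlib

set_option maxHeartbeats 1000000
open MeasureTheory

lemma integral_exp_neg_abs_sq (c : ℝ) (hc : 0 < c) :
    ∫ x : ℝ, Real.exp (-(c * |x|)) ^ 2 = 1 / c := by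
  have h1 : ∀ x : ℝ, Real.exp (-(c * |x|)) ^ 2 = Real.exp (-(2 * c * |x|)) := fun x => by
    rw [sq, ← Real.exp_add]; ring_nf
  simp_rw [h1]
  rw [integral_comp_abs (f := fun x => Real.exp (-(2 * c * x)))]
  have h := integral_comp_mul_left_Ioi (fun x => Real.exp (-x)) 0 (by positivity : (0:ℝ) < 2 * c)
  simp only [mul_zero] at h
  rw [h, integral_exp_neg_Ioi_zero]
  field_simp
  rw [smul_eq_mul, mul_one]
  field_simp

lemma integral_kg_two (k : ℂ) (hk : 0 < k.im) :
    (∫ x : ℝ, ‖Complex.exp (Complex.I * k * (|x| : ℝ))‖ ^ 2) = 1 / k.im := by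
  have h : ∀ x : ℝ, ‖Complex.exp (Complex.I * k * (|x| : ℝ))‖ ^ 2
      = Real.exp (-(k.im * |x|)) ^ 2 := fun x => by
    rw [Complex.norm_exp]
    congr 2
    simp [Complex.mul_re]
  simp_rw [h]
  exact integral_exp_neg_abs_sq k.im hk

lemma integral_kg_one (k : ℂ) (hk : 0 < k.im) :
    (∫ x : ℝ, ‖Complex.I * k * (Real.sign x : ℂ) * Complex.exp (Complex.I * k * (|x| : ℝ))‖ ^ 2)
      = (k.re ^ 2 + k.im ^ 2) * (1 / k.im) := by
  have h0 : ∀ᵐ x : ℝ, x ≠ 0 := by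
    refine (ae_iff.2 ?_)
    simp [Real.volume_singleton]
  rw [show (k.re ^ 2 + k.im ^ 2) * (1 / k.im)
      = ∫ x : ℝ, (k.re ^ 2 + k.im ^ 2) * Real.exp (-(k.im * |x|)) ^ 2 by
    rw [integral_const_mul, integral_exp_neg_abs_sq k.im hk]]
  refine integral_congr_ae ?_
  filter_upwards [h0] with x hx
  have hs : |Real.sign x| = 1 := by
    rcases lt_trichotomy x 0 with h | h | h
    · simp [Real.sign_of_neg h]
    · exact absurd h hx
    · simp [Real.sign_of_pos h]
  rw [norm_mul, norm_mul, norm_mul, Complex.norm_I, Complex.norm_real,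
    Complex.norm_exp, Real.norm_eq_abs, hs]
  have : (Complex.I * k * (|x| : ℝ)).re = -(k.im * |x|) := by
    simp [Complex.mul_re]
  rw [this]
  simp only [one_mul, mul_one]
  rw [mul_pow, Complex.sq_norm, Complex.normSq_apply]
  ring

theorem uniform_lower_bound_on_continuous_spectrum (m δ : ℝ) (hm : 0 < m) (hδ : 0 < δ) :
    ∃ εδ > (0 : ℝ), ∀ ω : ℝ, m + δ < |ω| → ∀ ε ∈ Set.Ioo (0 : ℝ) εδ, ∀ k : ℂ,
      0 < k.im → k ^ 2 = ((ω : ℂ) + (ε : ℂ) * Complex.I) ^ 2 - (m : ℂ) ^ 2 →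
      |ω| * Real.sqrt (ω ^ 2 - m ^ 2) / 2 ≤
        ε * ((∫ x : ℝ, ‖Complex.I * k * (Real.sign x : ℂ) *
                Complex.exp (Complex.I * k * (|x| : ℝ))‖ ^ 2)
          + m ^ 2 * ∫ x : ℝ, ‖Complex.exp (Complex.I * k * (|x| : ℝ))‖ ^ 2) := by
  refine ⟨min (Real.sqrt (δ * (2 * m + δ) / 2)) (m / 2), by positivity, ?_⟩
  intro ω hω ε hε k hkim hk2
  rw [integral_kg_one k hkim, integral_kg_two k hkim]
  set a := k.im with ha
  set b := k.re with hb
  -- extract real and imaginary parts of k^2 equation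
  have h1 := congrArg Complex.re hk2
  have h2 := congrArg Complex.im hk2
  simp only [pow_two, Complex.mul_re, Complex.mul_im, Complex.sub_re, Complex.sub_im,
    Complex.add_re, Complex.add_im, Complex.ofReal_re, Complex.ofReal_im, Complex.I_re,
    Complex.I_im] at h1 h2
  -- h1 : b*b - a*a = ω*ω - ε*ε - m*m ; h2 : 2ab = 2ωε (roughly)
  have hre : b ^ 2 - a ^ 2 = ω ^ 2 - ε ^ 2 - m ^ 2 := by nlinarith [h1]
  have him : a * b = ω * ε := by nlinarith [h2]
  have hε0 : 0 < ε := hε.1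
  have hεs : ε < Real.sqrt (δ * (2 * m + δ) / 2) := lt_of_lt_of_le hε.2 (min_le_left _ _)
  have hεm : ε < m / 2 := lt_of_lt_of_le hε.2 (min_le_right _ _)
  have hε1 : ε ^ 2 < δ * (2 * m + δ) / 2 :=
    (Real.lt_sqrt hε0.le).1 hεs
  have hexp0 : m ^ 2 ≤ (m + δ) ^ 2 := by nlinarith
  have hω2 : (m + δ) ^ 2 < ω ^ 2 := by
    have := pow_lt_pow_left₀ hω (by positivity) two_ne_zero
    rwa [sq_abs] at this
  have hωm : m ^ 2 < ω ^ 2 := by nlinarith [hω2, hexp0]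
  set s := Real.sqrt (ω ^ 2 - m ^ 2) with hs
  have hs2 : s ^ 2 = ω ^ 2 - m ^ 2 := Real.sq_sqrt (by nlinarith)
  have hspos : 0 < s := Real.sqrt_pos.2 (by nlinarith)
  -- ε² ≤ (ω²-m²)/2
  have hexp : m ^ 2 + δ * (2 * m + δ) = (m + δ) ^ 2 := by ring
  have hεsmall : ε ^ 2 < (ω ^ 2 - m ^ 2) / 2 := by linarith
  have hblow : (ω ^ 2 - m ^ 2) / 2 ≤ b ^ 2 := by linarith [sq_nonneg a]
  have ha2 : a ^ 2 * (ω ^ 2 - m ^ 2) ≤ 2 * (ω ^ 2 * ε ^ 2) := by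
    have habsq : a ^ 2 * b ^ 2 = ω ^ 2 * ε ^ 2 := by rw [← mul_pow, him, mul_pow]
    nlinarith [mul_nonneg (sq_nonneg a) (sub_nonneg.2 hblow), sq_nonneg a]
  have hAS : a * s ≤ Real.sqrt 2 * (|ω| * ε) := by
    have hsq2 : (Real.sqrt 2) ^ 2 = 2 := Real.sq_sqrt (by norm_num)
    have h1' : (a * s) ^ 2 ≤ (Real.sqrt 2 * (|ω| * ε)) ^ 2 := by
      calc (a * s) ^ 2 = a ^ 2 * s ^ 2 := by ring
        _ = a ^ 2 * (ω ^ 2 - m ^ 2) := by rw [hs2]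
        _ ≤ 2 * (ω ^ 2 * ε ^ 2) := ha2
        _ = (Real.sqrt 2 * (|ω| * ε)) ^ 2 := by rw [mul_pow, mul_pow, hsq2, sq_abs]
    exact (pow_le_pow_iff_left₀ (by positivity) (by positivity) two_ne_zero).1 h1'
  have hsqrt2 : Real.sqrt 2 ≤ 3 / 2 := by
    nlinarith [Real.sq_sqrt (by norm_num : (0:ℝ) ≤ 2), Real.sqrt_nonneg 2]
  have hεω : ε ^ 2 < ω ^ 2 / 4 := by
    have hmω : m ≤ |ω| := by linarith
    have hεlt : ε < |ω| / 2 := by linarith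
    have := pow_lt_pow_left₀ hεlt hε0.le two_ne_zero
    rw [div_pow, sq_abs] at this
    linarith
  -- rewrite RHS
  have hrhs : ε * ((b ^ 2 + a ^ 2) * (1 / a) + m ^ 2 * (1 / a))
      = ε * (b ^ 2 + a ^ 2 + m ^ 2) / a := by
    field_simp
  rw [hrhs, le_div_iff₀ hkim]
  have hωs : |ω| * (a * s) ≤ Real.sqrt 2 * (ω ^ 2 * ε) := by
    calc |ω| * (a * s) ≤ |ω| * (Real.sqrt 2 * (|ω| * ε)) :=
          mul_le_mul_of_nonneg_left hAS (abs_nonneg ω)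
      _ = Real.sqrt 2 * ((|ω| * |ω|) * ε) := by ring
      _ = Real.sqrt 2 * (ω ^ 2 * ε) := by rw [abs_mul_abs_self, ← sq]
  have hωε : (0:ℝ) ≤ ω ^ 2 * ε := by positivity
  have hcube : ε * ε ^ 2 ≤ ε * (ω ^ 2 / 4) := mul_le_mul_of_nonneg_left hεω.le hε0.le
  have hstep3 : Real.sqrt 2 * (ω ^ 2 * ε) / 2 ≤ 3 / 4 * (ω ^ 2 * ε) := by
    have := mul_le_mul_of_nonneg_right hsqrt2 hωε
    linarith
  have hstep4 : 3 / 4 * (ω ^ 2 * ε) ≤ ε * (ω ^ 2 - ε ^ 2) := by nlinarith [hcube]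
  have hstep5 : ε * (ω ^ 2 - ε ^ 2) ≤ ε * (b ^ 2 + a ^ 2 + m ^ 2) := by
    have h : ω ^ 2 - ε ^ 2 ≤ b ^ 2 + a ^ 2 + m ^ 2 := by nlinarith [sq_nonneg a, hre]
    exact mul_le_mul_of_nonneg_left h hε0.le
  calc |ω| * s / 2 * a = |ω| * (a * s) / 2 := by ring
    _ ≤ Real.sqrt 2 * (ω ^ 2 * ε) / 2 := by linarith
    _ ≤ 3 / 4 * (ω ^ 2 * ε) := hstep3
    _ ≤ ε * (ω ^ 2 - ε ^ 2) := hstep4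
    _ ≤ ε * (b ^ 2 + a ^ 2 + m ^ 2) := hstep5
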